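/- For every integer r ≥ 7, the strong metric dimension of the modular product of the path P_5 with the cycle C_r satisfies dim_s(P_5 ⋄ C_r) = 3r − 2. -/

import Mathlib

open SimpleGraph

/-- The closed neighborhood `N[v]` of a vertex. -/
def closedNbr {α : Type*} (G : SimpleGraph α) (v : α) : Set α :=
  insert v (G.neighborSet v)

/-- The modular product `G ⋄ H`. -/
def modularProduct {α β : Type*} (G : SimpleGraph α) (H : SimpleGraph β) :
    SimpleGraph (α × β) :=
  SimpleGraph.fromRel (fun x y =>
    (x.1 = y.1 ∧ H.Adj x.2 y.2) ∨
    (G.Adj x.1 y.1 ∧ x.2 = y.2) ∨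
    (G.Adj x.1 y.1 ∧ H.Adj x.2 y.2) ∨
    (x.1 ≠ y.1 ∧ x.2 ≠ y.2 ∧ ¬ G.Adj x.1 y.1 ∧ ¬ H.Adj x.2 y.2))

/-- `{g, g'}` is a `γ_G`-pair: the closed neighborhoods are disjoint and cover `V(G)`. -/
def gammaPair {α : Type*} (G : SimpleGraph α) (g g' : α) : Prop :=
  closedNbr G g ∩ closedNbr G g' = ∅ ∧ closedNbr G g ∪ closedNbr G g' = Set.univ

/-- A universal vertex. -/
def IsUniversal {α : Type*} (G : SimpleGraph α) (v : α) : Prop :=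
  closedNbr G v = Set.univ

/-- A complete graph: every two distinct vertices are adjacent. -/
def IsCompleteGraph {α : Type*} (G : SimpleGraph α) : Prop :=
  ∀ u v : α, u ≠ v → G.Adj u v

/-- `G` is a disjoint union of two cliques. -/
def TwoCliques {α : Type*} (G : SimpleGraph α) : Prop :=
  ∃ A B : Set α, A.Nonempty ∧ B.Nonempty ∧ A ∪ B = Set.univ ∧ A ∩ B = ∅ ∧
    (∀ u ∈ A, ∀ v ∈ A, u ≠ v → G.Adj u v) ∧
    (∀ u ∈ B, ∀ v ∈ B, u ≠ v → G.Adj u v) ∧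
    (∀ u ∈ A, ∀ v ∈ B, ¬ G.Adj u v)

/-- `u` and `v` are mutually maximally distant in `X`. -/
def MMD {α : Type*} (X : SimpleGraph α) (u v : α) : Prop :=
  (∀ w, X.Adj u w → X.edist w v ≤ X.edist u v) ∧
  (∀ w, X.Adj v w → X.edist w u ≤ X.edist u v)

/-- A strong resolving set of `X`. -/
def IsStrongResolvingSet {α : Type*} (X : SimpleGraph α) (S : Set α) : Prop :=
  ∀ u v : α, u ≠ v → ∃ w ∈ S,
    X.dist u w = X.dist u v + X.dist v w ∨ X.dist v w = X.dist v u + X.dist u w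

/-- The strong metric dimension of `X`. -/
noncomputable def sdim {α : Type*} (X : SimpleGraph α) : ℕ :=
  sInf {n | ∃ S : Set α, S.ncard = n ∧ IsStrongResolvingSet X S}

/-- The star `K_{1,n}`: the center is `none`, the leaves are `some i`. -/
def starGraph (n : ℕ) : SimpleGraph (Option (Fin n)) :=
  SimpleGraph.fromRel (fun u v => u = none ∧ v ≠ none)

/-- The vertex cover number `β(X)`. -/
noncomputable def vertexCoverNumber {γ : Type*} (X : SimpleGraph γ) : ℕ :=
  sInf {n | ∃ C : Set γ, C.ncard = n ∧ ∀ u v, X.Adj u v → u ∈ C ∨ v ∈ C}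

open Fin.NatCast Fin.CommRing

namespace MP

variable {n : ℕ}

abbrev Cy (n : ℕ) := cycleGraph (n+7)
abbrev Pa := pathGraph 5
abbrev X (n : ℕ) := modularProduct Pa (Cy n)

/-! ### cycle toolkit -/

lemma cadj_iff {a b : Fin (n+7)} : (Cy n).Adj a b ↔ a - b = 1 ∨ b - a = 1 :=
  cycleGraph_adj (n := n+5)

lemma natlit_ne_zero {k : ℕ} (h1 : 0 < k) (h2 : k < n+7) : ((k:ℕ) : Fin (n+7)) ≠ 0 := by
  intro h
  have := congrArg Fin.val h
  rw [Fin.val_cast_of_lt h2] at this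
  simp at this
  omega

lemma two_ne_zero' : (2 : Fin (n+7)) ≠ 0 := by
  have : (2 : Fin (n+7)) = ((2:ℕ) : Fin (n+7)) := by norm_cast
  rw [this]; exact natlit_ne_zero (by omega) (by omega)

lemma three_ne_zero' : (3 : Fin (n+7)) ≠ 0 := by
  have : (3 : Fin (n+7)) = ((3:ℕ) : Fin (n+7)) := by norm_cast
  rw [this]; exact natlit_ne_zero (by omega) (by omega)

lemma one_ne_zero' : (1 : Fin (n+7)) ≠ 0 := by
  have : (1 : Fin (n+7)) = ((1:ℕ) : Fin (n+7)) := by norm_cast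
  rw [this]; exact natlit_ne_zero (by omega) (by omega)

/-- `a` and `b` are at cycle distance at least 2. -/
def Far (a b : Fin (n+7)) : Prop := a ≠ b ∧ ¬(Cy n).Adj a b

lemma Far.symm {a b : Fin (n+7)} (h : Far a b) : Far b a :=
  ⟨h.1.symm, fun hh => h.2 hh.symm⟩

lemma trichotomy (a b : Fin (n+7)) : a = b ∨ (Cy n).Adj a b ∨ Far a b := by
  by_cases h1 : a = b
  · exact Or.inl h1
  by_cases h2 : (Cy n).Adj a b
  · exact Or.inr (Or.inl h2)
  · exact Or.inr (Or.inr ⟨h1, h2⟩)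

lemma cadj_add_one (a : Fin (n+7)) : (Cy n).Adj a (a+1) := by
  rw [cadj_iff]; right; ring

lemma far_add_two (a : Fin (n+7)) : Far (a+2) a := by
  constructor
  · intro h
    exact two_ne_zero' (by linear_combination h)
  · intro h
    rcases cadj_iff.mp h with h | h
    · exact one_ne_zero' (by linear_combination h)
    · exact three_ne_zero' (by linear_combination -h)

lemma far_of_add_two {a b : Fin (n+7)} (h : b = a + 2) : Far b a := h ▸ far_add_two a

lemma far_of_sub_two {a b : Fin (n+7)} (h : b = a - 2) : Far b a := by
  have h2 : a = b + 2 := by linear_combination -h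
  exact (far_of_add_two h2).symm

lemma triangle_free {a b c : Fin (n+7)} (h1 : (Cy n).Adj a b) (h2 : (Cy n).Adj b c)
    (h3 : (Cy n).Adj a c) : False := by
  rcases cadj_iff.mp h1 with hb | hb
  · -- a - b = 1, b = a - 1
    have hb' : b = a - 1 := by linear_combination -hb
    subst hb'
    rcases cadj_iff.mp h2 with hc | hc
    · -- a - 1 - c = 1, c = a - 2
      have hc' : c = a - 2 := by linear_combination -hc
      subst hc'
      exact (far_of_sub_two (a := a) rfl).2 h3.symm
    · have hc' : c = a := by linear_combination hc
      subst hc'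
      exact (Cy n).irrefl h3
  · -- b = a + 1
    have hb' : b = a + 1 := by linear_combination hb
    subst hb'
    rcases cadj_iff.mp h2 with hc | hc
    · have hc' : c = a := by linear_combination -hc
      subst hc'
      exact (Cy n).irrefl h3
    · have hc' : c = a + 2 := by linear_combination hc
      subst hc'
      exact (far_of_add_two (a := a) rfl).2 h3.symm

lemma exists_far_far (a b : Fin (n+7)) : ∃ m : Fin (n+7), Far m a ∧ Far m b := by
  set T : Finset (Fin (n+7)) := {a-1, a, a+1, b-1, b, b+1} with hT
  have hTcard : T.card ≤ 6 := by
    have : T = [a-1, a, a+1, b-1, b, b+1].toFinset := by simp [hT]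
    rw [this]
    exact le_trans (List.toFinset_card_le _) (by simp)
  have hex : ∃ m, m ∉ T := by
    by_contra hc
    push_neg at hc
    have : Finset.univ ⊆ T := fun x _ => hc x
    have := Finset.card_le_card this
    rw [Finset.card_univ, Fintype.card_fin] at this
    omega
  obtain ⟨m, hm⟩ := hex
  have hmem : ∀ x : Fin (n+7), x ∈ T ↔ (x = a-1 ∨ x = a ∨ x = a+1 ∨ x = b-1 ∨ x = b ∨ x = b+1) := by
    intro x; simp [hT]
  refine ⟨m, ⟨?_, ?_⟩, ⟨?_, ?_⟩⟩
  · intro h; exact hm ((hmem m).mpr (Or.inr (Or.inl h)))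
  · intro h
    rcases cadj_iff.mp h with h' | h'
    · exact hm ((hmem m).mpr (Or.inr (Or.inr (Or.inl (by linear_combination h')))))
    · exact hm ((hmem m).mpr (Or.inl (by linear_combination -h')))
  · intro h; exact hm ((hmem m).mpr (Or.inr (Or.inr (Or.inr (Or.inr (Or.inl h))))))
  · intro h
    rcases cadj_iff.mp h with h' | h'
    · exact hm ((hmem m).mpr (Or.inr (Or.inr (Or.inr (Or.inr (Or.inr (by linear_combination h')))))))
    · exact hm ((hmem m).mpr (Or.inr (Or.inr (Or.inr (Or.inl (by linear_combination -h'))))))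

/-! ### adjacency -/

lemma adj_iff (x y : Fin 5 × Fin (n+7)) : (X n).Adj x y ↔ x ≠ y ∧
    ((x.1 = y.1 ∧ (Cy n).Adj x.2 y.2) ∨ (Pa.Adj x.1 y.1 ∧ x.2 = y.2) ∨
     (Pa.Adj x.1 y.1 ∧ (Cy n).Adj x.2 y.2) ∨
     (x.1 ≠ y.1 ∧ x.2 ≠ y.2 ∧ ¬Pa.Adj x.1 y.1 ∧ ¬(Cy n).Adj x.2 y.2)) := by
  show (SimpleGraph.fromRel _).Adj x y ↔ _
  rw [fromRel_adj]
  have hsym : ∀ u v : Fin 5 × Fin (n+7),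
      ((u.1 = v.1 ∧ (Cy n).Adj u.2 v.2) ∨ (Pa.Adj u.1 v.1 ∧ u.2 = v.2) ∨
       (Pa.Adj u.1 v.1 ∧ (Cy n).Adj u.2 v.2) ∨
       (u.1 ≠ v.1 ∧ u.2 ≠ v.2 ∧ ¬Pa.Adj u.1 v.1 ∧ ¬(Cy n).Adj u.2 v.2)) →
      ((v.1 = u.1 ∧ (Cy n).Adj v.2 u.2) ∨ (Pa.Adj v.1 u.1 ∧ v.2 = u.2) ∨
       (Pa.Adj v.1 u.1 ∧ (Cy n).Adj v.2 u.2) ∨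
       (v.1 ≠ u.1 ∧ v.2 ≠ u.2 ∧ ¬Pa.Adj v.1 u.1 ∧ ¬(Cy n).Adj v.2 u.2)) := by
    rintro u v (⟨h1, h2⟩ | ⟨h1, h2⟩ | ⟨h1, h2⟩ | ⟨h1, h2, h3, h4⟩)
    · exact Or.inl ⟨h1.symm, h2.symm⟩
    · exact Or.inr (Or.inl ⟨h1.symm, h2.symm⟩)
    · exact Or.inr (Or.inr (Or.inl ⟨h1.symm, h2.symm⟩))
    · exact Or.inr (Or.inr (Or.inr ⟨h1.symm, h2.symm, fun h => h3 h.symm, fun h => h4 h.symm⟩))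
  constructor
  · rintro ⟨hne, h | h⟩
    · exact ⟨hne, h⟩
    · exact ⟨hne, hsym _ _ h⟩
  · rintro ⟨hne, h⟩
    exact ⟨hne, Or.inl h⟩

lemma padj_iff {i j : Fin 5} : Pa.Adj i j ↔ (i.val + 1 = j.val ∨ j.val + 1 = i.val) := pathGraph_adj

/-- same row, cycle-adjacent columns -/
lemma adj_A {g : Fin 5} {a b : Fin (n+7)} (h : (Cy n).Adj a b) : (X n).Adj (g,a) (g,b) := by
  rw [adj_iff]
  exact ⟨by simp [Prod.ext_iff, h.ne], Or.inl ⟨rfl, h⟩⟩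

/-- path-adjacent rows, equal columns -/
lemma adj_B {g g' : Fin 5} {a : Fin (n+7)} (h : Pa.Adj g g') : (X n).Adj (g,a) (g',a) := by
  rw [adj_iff]
  exact ⟨by simp [Prod.ext_iff, h.ne], Or.inr (Or.inl ⟨h, rfl⟩)⟩

/-- path-adjacent rows, cycle-adjacent columns -/
lemma adj_C {g g' : Fin 5} {a b : Fin (n+7)} (h : Pa.Adj g g') (h2 : (Cy n).Adj a b) :
    (X n).Adj (g,a) (g',b) := by
  rw [adj_iff]
  exact ⟨by simp [Prod.ext_iff]; intro hg; exact absurd hg h.ne,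
    Or.inr (Or.inr (Or.inl ⟨h, h2⟩))⟩

/-- far rows, far columns -/
lemma adj_D {g g' : Fin 5} {a b : Fin (n+7)} (hg : g ≠ g') (hg2 : ¬Pa.Adj g g')
    (h : Far a b) : (X n).Adj (g,a) (g',b) := by
  rw [adj_iff]
  exact ⟨by simp [Prod.ext_iff]; intro hgg; exact absurd hgg hg,
    Or.inr (Or.inr (Or.inr ⟨hg, h.1, hg2, h.2⟩))⟩

/-- same row, far columns: not adjacent -/
lemma not_adj_E {g : Fin 5} {a b : Fin (n+7)} (h : ¬(Cy n).Adj a b) :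
    ¬(X n).Adj (g,a) (g,b) := by
  rw [adj_iff]
  rintro ⟨hne, ⟨-, h2⟩ | ⟨h1, -⟩ | ⟨h1, -⟩ | ⟨h1, -⟩⟩
  · exact h h2
  · exact Pa.irrefl h1
  · exact Pa.irrefl h1
  · exact h1 rfl

/-- path-adjacent rows, far columns: not adjacent -/
lemma not_adj_F {g g' : Fin 5} {a b : Fin (n+7)} (hg : Pa.Adj g g') (h : Far a b) :
    ¬(X n).Adj (g,a) (g',b) := by
  rw [adj_iff]
  rintro ⟨hne, ⟨h1, -⟩ | ⟨-, h2⟩ | ⟨-, h2⟩ | ⟨-, -, h2, -⟩⟩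
  · exact hg.ne h1
  · exact h.1 h2
  · exact h.2 h2
  · exact h2 hg

/-- far rows, equal-or-cycle-adjacent columns: not adjacent -/
lemma not_adj_G {g g' : Fin 5} {a b : Fin (n+7)} (hg : g ≠ g') (hg2 : ¬Pa.Adj g g')
    (h : a = b ∨ (Cy n).Adj a b) : ¬(X n).Adj (g,a) (g',b) := by
  rw [adj_iff]
  rintro ⟨hne, ⟨h1, -⟩ | ⟨h1, -⟩ | ⟨h1, -⟩ | ⟨-, h2, -, h3⟩⟩
  · exact hg h1
  · exact hg2 h1
  · exact hg2 h1
  · rcases h with h | h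
    · exact h2 h
    · exact h3 h

/-! ### generic distance helpers -/

section distHelpers
variable {V : Type*} {G : SimpleGraph V} {u v : V}

lemma dist_eq_two_of (hne : u ≠ v) (hnadj : ¬G.Adj u v) {w : V}
    (h1 : G.Adj u w) (h2 : G.Adj w v) : G.dist u v = 2 := by
  have hle : G.dist u v ≤ 2 := by
    have := SimpleGraph.dist_le (SimpleGraph.Walk.cons h1 (SimpleGraph.Walk.cons h2 SimpleGraph.Walk.nil))
    simpa using this
  have hreach : G.Reachable u v := ⟨SimpleGraph.Walk.cons h1 (SimpleGraph.Walk.cons h2 SimpleGraph.Walk.nil)⟩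
  have hpos : 0 < G.dist u v := hreach.pos_dist_of_ne hne
  have hne1 : G.dist u v ≠ 1 := fun h => hnadj (SimpleGraph.dist_eq_one_iff_adj.mp h)
  omega

lemma exists_mid_of_dist_two (h : G.dist u v = 2) : ∃ w, G.Adj u w ∧ G.Adj w v := by
  have hne0 : G.dist u v ≠ 0 := by rw [h]; norm_num
  obtain ⟨p, hp⟩ := SimpleGraph.exists_walk_of_dist_ne_zero hne0
  rw [h] at hp
  match p, hp with
  | SimpleGraph.Walk.cons h1 q, hp =>
    match q, hp with
    | SimpleGraph.Walk.cons h2 q2, hp =>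
      have : q2.length = 0 := by simpa using hp
      have := SimpleGraph.Walk.eq_of_length_eq_zero this
      subst this
      exact ⟨_, h1, h2⟩

lemma dist_eq_three_of (hnadj : ¬G.Adj u v)
    (hno : ∀ w, ¬(G.Adj u w ∧ G.Adj w v)) {w1 w2 : V}
    (h1 : G.Adj u w1) (h2 : G.Adj w1 w2) (h3 : G.Adj w2 v) : G.dist u v = 3 := by
  have hne : u ≠ v := by
    rintro rfl
    exact hno w1 ⟨h1, h1.symm⟩
  have hle : G.dist u v ≤ 3 := by
    have := SimpleGraph.dist_le (SimpleGraph.Walk.cons h1 (SimpleGraph.Walk.cons h2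
      (SimpleGraph.Walk.cons h3 SimpleGraph.Walk.nil)))
    simpa using this
  have hreach : G.Reachable u v := ⟨SimpleGraph.Walk.cons h1 (SimpleGraph.Walk.cons h2
    (SimpleGraph.Walk.cons h3 SimpleGraph.Walk.nil))⟩
  have hpos : 0 < G.dist u v := hreach.pos_dist_of_ne hne
  have hne1 : G.dist u v ≠ 1 := fun h => hnadj (SimpleGraph.dist_eq_one_iff_adj.mp h)
  have hne2 : G.dist u v ≠ 2 := by
    intro h
    obtain ⟨w, hw1, hw2⟩ := exists_mid_of_dist_two h
    exact hno w ⟨hw1, hw2⟩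
  omega

end distHelpers

end MP
/-! ### adjacency extraction -/
namespace MP
variable {n : ℕ}

lemma adj_same_row {g : Fin 5} {a b : Fin (n+7)} (h : (X n).Adj (g,a) (g,b)) :
    (Cy n).Adj a b := by
  rw [adj_iff] at h
  rcases h.2 with ⟨-, h2⟩ | ⟨h1, -⟩ | ⟨h1, -⟩ | ⟨h1, -⟩
  exacts [h2, absurd h1 Pa.irrefl, absurd h1 Pa.irrefl, absurd rfl h1]

lemma adj_of_far_rows {g g' : Fin 5} (hg : g ≠ g') (hp : ¬Pa.Adj g g')
    {a b : Fin (n+7)} (h : (X n).Adj (g,a) (g',b)) : Far a b := by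
  rw [adj_iff] at h
  rcases h.2 with ⟨h1, -⟩ | ⟨h1, -⟩ | ⟨h1, -⟩ | ⟨-, h2, -, h3⟩
  exacts [absurd h1 hg, absurd h1 hp, absurd h1 hp, ⟨h2, h3⟩]

lemma adj_of_padj_rows {g g' : Fin 5} (hp : Pa.Adj g g')
    {a b : Fin (n+7)} (h : (X n).Adj (g,a) (g',b)) : a = b ∨ (Cy n).Adj a b := by
  rw [adj_iff] at h
  rcases h.2 with ⟨h1, -⟩ | ⟨-, h2⟩ | ⟨-, h2⟩ | ⟨-, -, h2, -⟩
  exacts [absurd h1 hp.ne, Or.inl h2, Or.inr h2, absurd hp h2]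

/-! ### path adjacency shortcuts -/

lemma pa' (i j : Fin 5) (h : i.val + 1 = j.val ∨ j.val + 1 = i.val) : Pa.Adj i j :=
  padj_iff.mpr h

lemma npa' (i j : Fin 5) (h : ¬(i.val + 1 = j.val ∨ j.val + 1 = i.val)) : ¬Pa.Adj i j :=
  fun hh => h (padj_iff.mp hh)

/-! ### distance-1 -/

lemma dist_one {u v : Fin 5 × Fin (n+7)} (h : (X n).Adj u v) : (X n).dist u v = 1 :=
  SimpleGraph.dist_eq_one_iff_adj.mpr h

/-! ### pigeonhole distance-2 -/

lemma dist_two_pigeon {g g' : Fin 5} {a b : Fin (n+7)} (k : Fin 5)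
    (hnadj : ¬(X n).Adj (g,a) (g',b))
    (hne : (⟨g,a⟩ : Fin 5 × Fin (n+7)) ≠ (g',b))
    (h1 : k ≠ g) (h2 : ¬Pa.Adj k g) (h3 : k ≠ g') (h4 : ¬Pa.Adj k g') :
    (X n).dist (g,a) (g',b) = 2 := by
  obtain ⟨m, hma, hmb⟩ := exists_far_far a b
  exact dist_eq_two_of hne hnadj
    (adj_D h1.symm (fun h => h2 h.symm) hma.symm) (adj_D h3 h4 hmb)

/-! ### the distance table -/

lemma dist_22_far {a b : Fin (n+7)} (h : Far a b) : (X n).dist (2,a) (2,b) = 2 :=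
  dist_two_pigeon 0 (not_adj_E h.2) (by simp [Prod.ext_iff, h.1])
    (by decide) (npa' _ _ (by decide)) (by decide) (npa' _ _ (by decide))

lemma dist_33_far {a b : Fin (n+7)} (h : Far a b) : (X n).dist (3,a) (3,b) = 2 :=
  dist_two_pigeon 0 (not_adj_E h.2) (by simp [Prod.ext_iff, h.1])
    (by decide) (npa' _ _ (by decide)) (by decide) (npa' _ _ (by decide))

lemma dist_44_far {a b : Fin (n+7)} (h : Far a b) : (X n).dist (4,a) (4,b) = 2 :=
  dist_two_pigeon 0 (not_adj_E h.2) (by simp [Prod.ext_iff, h.1])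
    (by decide) (npa' _ _ (by decide)) (by decide) (npa' _ _ (by decide))

lemma dist_34_far {a b : Fin (n+7)} (h : Far a b) : (X n).dist (3,a) (4,b) = 2 :=
  dist_two_pigeon 0 (not_adj_F (pa' _ _ (by decide)) h) (by simp [Prod.ext_iff])
    (by decide) (npa' _ _ (by decide)) (by decide) (npa' _ _ (by decide))

lemma dist_23_far {a b : Fin (n+7)} (h : Far a b) : (X n).dist (2,a) (3,b) = 2 :=
  dist_two_pigeon 0 (not_adj_F (pa' _ _ (by decide)) h) (by simp [Prod.ext_iff])
    (by decide) (npa' _ _ (by decide)) (by decide) (npa' _ _ (by decide))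

lemma dist_12_far {a b : Fin (n+7)} (h : Far a b) : (X n).dist (1,a) (2,b) = 2 :=
  dist_two_pigeon 4 (not_adj_F (pa' _ _ (by decide)) h) (by simp [Prod.ext_iff])
    (by decide) (npa' _ _ (by decide)) (by decide) (npa' _ _ (by decide))

lemma dist_42_near {a b : Fin (n+7)} (h : a = b ∨ (Cy n).Adj a b) :
    (X n).dist (4,a) (2,b) = 2 := by
  have hnadj : ¬(X n).Adj (4,a) (2,b) := not_adj_G (by decide) (npa' _ _ (by decide)) h
  have h1 : (X n).Adj (4,a) (3,b) := by
    rcases h with rfl | h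
    · exact adj_B (pa' _ _ (by decide))
    · exact adj_C (pa' _ _ (by decide)) h
  exact dist_eq_two_of (by simp [Prod.ext_iff]) hnadj h1 (adj_B (pa' _ _ (by decide)))

lemma dist_42_far {a b : Fin (n+7)} (h : Far a b) : (X n).dist (4,a) (2,b) = 1 :=
  dist_one (adj_D (by decide) (npa' _ _ (by decide)) h)

lemma dist_02_near {a b : Fin (n+7)} (h : a = b ∨ (Cy n).Adj a b) :
    (X n).dist (0,a) (2,b) = 2 := by
  have hnadj : ¬(X n).Adj (0,a) (2,b) := not_adj_G (by decide) (npa' _ _ (by decide)) h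
  have h2 : (X n).Adj (1,a) (2,b) := by
    rcases h with rfl | h
    · exact adj_B (pa' _ _ (by decide))
    · exact adj_C (pa' _ _ (by decide)) h
  exact dist_eq_two_of (by simp [Prod.ext_iff]) hnadj (adj_B (pa' _ _ (by decide))) h2

lemma dist_02_far {a b : Fin (n+7)} (h : Far a b) : (X n).dist (0,a) (2,b) = 1 :=
  dist_one (adj_D (by decide) (npa' _ _ (by decide)) h)

lemma dist_04_near {a b : Fin (n+7)} (h : a = b ∨ (Cy n).Adj a b) :
    (X n).dist (0,a) (4,b) = 2 :=
  dist_two_pigeon 2 (not_adj_G (by decide) (npa' _ _ (by decide)) h)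
    (by simp [Prod.ext_iff]) (by decide) (npa' _ _ (by decide)) (by decide)
    (npa' _ _ (by decide))

lemma dist_04_far {a b : Fin (n+7)} (h : Far a b) : (X n).dist (0,a) (4,b) = 1 :=
  dist_one (adj_D (by decide) (npa' _ _ (by decide)) h)

lemma dist_13_near {a b : Fin (n+7)} (h : a = b ∨ (Cy n).Adj a b) :
    (X n).dist (1,a) (3,b) = 2 := by
  have hnadj : ¬(X n).Adj (1,a) (3,b) := not_adj_G (by decide) (npa' _ _ (by decide)) h
  have h2 : (X n).Adj (2,a) (3,b) := by
    rcases h with rfl | h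
    · exact adj_B (pa' _ _ (by decide))
    · exact adj_C (pa' _ _ (by decide)) h
  exact dist_eq_two_of (by simp [Prod.ext_iff]) hnadj (adj_B (pa' _ _ (by decide))) h2

lemma dist_13_far {a b : Fin (n+7)} (h : Far a b) : (X n).dist (1,a) (3,b) = 1 :=
  dist_one (adj_D (by decide) (npa' _ _ (by decide)) h)

lemma dist_03_cadj {a b : Fin (n+7)} (h : (Cy n).Adj a b) : (X n).dist (0,a) (3,b) = 2 := by
  have hnadj : ¬(X n).Adj (0,a) (3,b) :=
    not_adj_G (by decide) (npa' _ _ (by decide)) (Or.inr h)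
  rcases cadj_iff.mp h with h' | h'
  · -- a - b = 1 : b = a - 1, take m = b - 1 = a - 2
    have hb : b = a - 1 := by linear_combination -h'
    have hm : (b - 1 : Fin (n+7)) = a - 2 := by rw [hb]; ring
    have hfar : Far a (b-1) := by
      refine Far.symm ?_
      exact far_of_sub_two hm
    have hcadj : (Cy n).Adj (b-1) b := by
      have := cadj_add_one (b-1)
      have hh : (b-1) + 1 = b := by ring
      rwa [hh] at this
    exact dist_eq_two_of (w := ((2:Fin 5), b-1)) (by simp [Prod.ext_iff]) hnadj
      (adj_D (by decide) (npa' _ _ (by decide)) hfar)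
      (adj_C (pa' _ _ (by decide)) hcadj)
  · -- b = a + 1, take m = b + 1 = a + 2
    have hb : b = a + 1 := by linear_combination h'
    have hm : (b + 1 : Fin (n+7)) = a + 2 := by rw [hb]; ring
    have hfar : Far a (b+1) := (far_of_add_two hm).symm
    have hcadj : (Cy n).Adj (b+1) b := (cadj_add_one b).symm
    exact dist_eq_two_of (w := ((2:Fin 5), b+1)) (by simp [Prod.ext_iff]) hnadj
      (adj_D (by decide) (npa' _ _ (by decide)) hfar)
      (adj_C (pa' _ _ (by decide)) hcadj)

lemma dist_03_far {a b : Fin (n+7)} (h : Far a b) : (X n).dist (0,a) (3,b) = 1 :=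
  dist_one (adj_D (by decide) (npa' _ _ (by decide)) h)

lemma dist_14_cadj {a b : Fin (n+7)} (h : (Cy n).Adj a b) : (X n).dist (1,a) (4,b) = 2 := by
  have hnadj : ¬(X n).Adj (1,a) (4,b) :=
    not_adj_G (by decide) (npa' _ _ (by decide)) (Or.inr h)
  rcases cadj_iff.mp h with h' | h'
  · have hb : b = a - 1 := by linear_combination -h'
    have hm : (b - 1 : Fin (n+7)) = a - 2 := by rw [hb]; ring
    have hfar : Far a (b-1) := Far.symm (far_of_sub_two hm)
    have hcadj : (Cy n).Adj (b-1) b := by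
      have := cadj_add_one (b-1)
      have hh : (b-1) + 1 = b := by ring
      rwa [hh] at this
    exact dist_eq_two_of (w := ((3:Fin 5), b-1)) (by simp [Prod.ext_iff]) hnadj
      (adj_D (by decide) (npa' _ _ (by decide)) hfar)
      (adj_C (pa' _ _ (by decide)) hcadj)
  · have hb : b = a + 1 := by linear_combination h'
    have hm : (b + 1 : Fin (n+7)) = a + 2 := by rw [hb]; ring
    have hfar : Far a (b+1) := Far.symm (far_of_add_two hm)
    have hcadj : (Cy n).Adj (b+1) b := (cadj_add_one b).symm
    exact dist_eq_two_of (w := ((3:Fin 5), b+1)) (by simp [Prod.ext_iff]) hnadj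
      (adj_D (by decide) (npa' _ _ (by decide)) hfar)
      (adj_C (pa' _ _ (by decide)) hcadj)

lemma dist_14_far {a b : Fin (n+7)} (h : Far a b) : (X n).dist (1,a) (4,b) = 1 :=
  dist_one (adj_D (by decide) (npa' _ _ (by decide)) h)

lemma dist_03_eq (a : Fin (n+7)) : (X n).dist (0,a) (3,a) = 3 := by
  apply dist_eq_three_of (w1 := ((1 : Fin 5), a)) (w2 := ((2 : Fin 5), a))
  · exact not_adj_G (by decide) (npa' _ _ (by decide)) (Or.inl rfl)
  · rintro ⟨g, m⟩ ⟨h1, h2⟩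
    fin_cases g
    · exact (adj_of_far_rows (by decide) (npa' _ _ (by decide)) h2).2 (adj_same_row h1).symm
    · rcases adj_of_padj_rows (pa' _ _ (by decide)) h1 with rfl | hc
      · exact (adj_of_far_rows (by decide) (npa' _ _ (by decide)) h2).1 rfl
      · exact (adj_of_far_rows (by decide) (npa' _ _ (by decide)) h2).2 hc.symm
    · have hf := adj_of_far_rows (by decide) (npa' (0:Fin 5) 2 (by decide)) h1
      rcases adj_of_padj_rows (pa' _ _ (by decide)) h2 with hh | hc
      · exact hf.1 hh.symm
      · exact hf.2 hc.symm
    · have hf := adj_of_far_rows (by decide) (npa' (0:Fin 5) 3 (by decide)) h1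
      exact hf.2 (adj_same_row h2).symm
    · have hf := adj_of_far_rows (by decide) (npa' (0:Fin 5) 4 (by decide)) h1
      rcases adj_of_padj_rows ((pa' (3:Fin 5) 4 (by decide)).symm) h2 with hh | hc
      · exact hf.1 hh.symm
      · exact hf.2 hc.symm
  · exact adj_B (pa' _ _ (by decide))
  · exact adj_B (pa' _ _ (by decide))
  · exact adj_B (pa' _ _ (by decide))

lemma dist_14_eq (a : Fin (n+7)) : (X n).dist (1,a) (4,a) = 3 := by
  apply dist_eq_three_of (w1 := ((2 : Fin 5), a)) (w2 := ((3 : Fin 5), a))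
  · exact not_adj_G (by decide) (npa' _ _ (by decide)) (Or.inl rfl)
  · rintro ⟨g, m⟩ ⟨h1, h2⟩
    fin_cases g
    · have hf := adj_of_far_rows (by decide) (npa' (0:Fin 5) 4 (by decide)) h2
      rcases adj_of_padj_rows ((pa' (0:Fin 5) 1 (by decide)).symm) h1 with hh | hc
      · exact hf.1 hh.symm
      · exact hf.2 hc.symm
    · have hf := adj_of_far_rows (by decide) (npa' (1:Fin 5) 4 (by decide)) h2
      exact hf.2 (adj_same_row h1).symm
    · have hf := adj_of_far_rows (by decide) (npa' (2:Fin 5) 4 (by decide)) h2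
      rcases adj_of_padj_rows (pa' (1:Fin 5) 2 (by decide)) h1 with rfl | hc
      · exact hf.1 rfl
      · exact hf.2 hc.symm
    · have hf := adj_of_far_rows (by decide) (npa' (1:Fin 5) 3 (by decide)) h1
      rcases adj_of_padj_rows (pa' (3:Fin 5) 4 (by decide)) h2 with hh | hc
      · exact hf.1 hh.symm
      · exact hf.2 hc.symm
    · have hf := adj_of_far_rows (by decide) (npa' (1:Fin 5) 4 (by decide)) h1
      exact hf.2 (adj_same_row h2).symm
  · exact adj_B (pa' _ _ (by decide))
  · exact adj_B (pa' _ _ (by decide))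
  · exact adj_B (pa' _ _ (by decide))

end MP
namespace MP
variable {n : ℕ}

open SimpleGraph.Walk in
lemma walk2_from_2 (c : Fin (n+7)) (w : Fin 5 × Fin (n+7)) :
    ∃ p : (X n).Walk (2,c) w, p.length ≤ 2 := by
  obtain ⟨g, h⟩ := w
  have pa21 : Pa.Adj 2 1 := pa' _ _ (by decide)
  have pa10 : Pa.Adj 1 0 := pa' _ _ (by decide)
  have pa23 : Pa.Adj 2 3 := pa' _ _ (by decide)
  have pa34 : Pa.Adj 3 4 := pa' _ _ (by decide)
  fin_cases g
  · -- g = 0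
    rcases trichotomy c h with rfl | hc | hf
    · exact ⟨cons (adj_B pa21) (cons (adj_B pa10) nil), by simp⟩
    · exact ⟨cons (adj_B pa21) (cons (adj_C pa10 hc) nil), by simp⟩
    · exact ⟨cons (adj_D (by decide) (npa' _ _ (by decide)) hf) nil, by simp⟩
  · -- g = 1
    rcases trichotomy c h with rfl | hc | hf
    · exact ⟨cons (adj_B pa21) nil, by simp⟩
    · exact ⟨cons (adj_C pa21 hc) nil, by simp⟩
    · obtain ⟨m, hm1, hm2⟩ := exists_far_far c h
      have e1 : (X n).Adj (2,c) ((4:Fin 5),m) := adj_D (by decide) (npa' _ _ (by decide)) hm1.symm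
      have e2 : (X n).Adj ((4:Fin 5),m) ((1:Fin 5),h) := adj_D (by decide) (npa' _ _ (by decide)) hm2
      exact ⟨cons e1 (cons e2 nil), by simp⟩
  · -- g = 2
    rcases trichotomy c h with rfl | hc | hf
    · exact ⟨nil, by simp⟩
    · exact ⟨cons (adj_A hc) nil, by simp⟩
    · obtain ⟨m, hm1, hm2⟩ := exists_far_far c h
      have e1 : (X n).Adj (2,c) ((0:Fin 5),m) := adj_D (by decide) (npa' _ _ (by decide)) hm1.symm
      have e2 : (X n).Adj ((0:Fin 5),m) ((2:Fin 5),h) := adj_D (by decide) (npa' _ _ (by decide)) hm2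
      exact ⟨cons e1 (cons e2 nil), by simp⟩
  · -- g = 3
    rcases trichotomy c h with rfl | hc | hf
    · exact ⟨cons (adj_B pa23) nil, by simp⟩
    · exact ⟨cons (adj_C pa23 hc) nil, by simp⟩
    · obtain ⟨m, hm1, hm2⟩ := exists_far_far c h
      have e1 : (X n).Adj (2,c) ((0:Fin 5),m) := adj_D (by decide) (npa' _ _ (by decide)) hm1.symm
      have e2 : (X n).Adj ((0:Fin 5),m) ((3:Fin 5),h) := adj_D (by decide) (npa' _ _ (by decide)) hm2
      exact ⟨cons e1 (cons e2 nil), by simp⟩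
  · -- g = 4
    rcases trichotomy c h with rfl | hc | hf
    · exact ⟨cons (adj_B pa23) (cons (adj_B pa34) nil), by simp⟩
    · exact ⟨cons (adj_B pa23) (cons (adj_C pa34 hc) nil), by simp⟩
    · exact ⟨cons (adj_D (by decide) (npa' _ _ (by decide)) hf) nil, by simp⟩

lemma dist_from2_le (c : Fin (n+7)) (w : Fin 5 × Fin (n+7)) :
    (X n).dist (2,c) w ≤ 2 := by
  obtain ⟨p, hp⟩ := walk2_from_2 c w
  exact le_trans (SimpleGraph.dist_le p) hp

open SimpleGraph.Walk in
lemma walk3 (u w : Fin 5 × Fin (n+7)) : ∃ p : (X n).Walk u w, p.length ≤ 3 := by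
  obtain ⟨g, a⟩ := u
  fin_cases g
  · obtain ⟨p, hp⟩ := walk2_from_2 (a+2) w
    have e : (X n).Adj ((0:Fin 5),a) ((2:Fin 5),a+2) :=
      adj_D (by decide) (npa' _ _ (by decide)) (far_add_two a).symm
    exact ⟨cons e p, by simp only [length_cons]; omega⟩
  · obtain ⟨p, hp⟩ := walk2_from_2 a w
    have e : (X n).Adj ((1:Fin 5),a) ((2:Fin 5),a) := adj_B (pa' _ _ (by decide))
    exact ⟨cons e p, by simp only [length_cons]; omega⟩
  · obtain ⟨p, hp⟩ := walk2_from_2 a w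
    exact ⟨p, le_trans hp (by omega)⟩
  · obtain ⟨p, hp⟩ := walk2_from_2 a w
    have e : (X n).Adj ((3:Fin 5),a) ((2:Fin 5),a) := adj_B (pa' _ _ (by decide))
    exact ⟨cons e p, by simp only [length_cons]; omega⟩
  · obtain ⟨p, hp⟩ := walk2_from_2 (a+2) w
    have e : (X n).Adj ((4:Fin 5),a) ((2:Fin 5),a+2) :=
      adj_D (by decide) (npa' _ _ (by decide)) (far_add_two a).symm
    exact ⟨cons e p, by simp only [length_cons]; omega⟩

lemma dist_le3 (u w : Fin 5 × Fin (n+7)) : (X n).dist u w ≤ 3 := by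
  obtain ⟨p, hp⟩ := walk3 u w
  exact le_trans (SimpleGraph.dist_le p) hp

lemma reachable_all (u w : Fin 5 × Fin (n+7)) : (X n).Reachable u w :=
  ⟨(walk3 u w).choose⟩

end MP
namespace MP
variable {n : ℕ}

lemma two_ne_one' : (2 : Fin (n+7)) ≠ 1 := by
  intro h
  exact one_ne_zero' (by linear_combination h)

lemma forced_of_dist3 {S : Set (Fin 5 × Fin (n+7))} (hS : IsStrongResolvingSet (X n) S)
    {u v : Fin 5 × Fin (n+7)} (hd : (X n).dist u v = 3) : u ∈ S ∨ v ∈ S := by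
  have hne : u ≠ v := by
    rintro rfl
    rw [SimpleGraph.dist_self] at hd
    omega
  obtain ⟨w, hwS, hw⟩ := hS u v hne
  rcases hw with hw | hw
  · rw [hd] at hw
    have h1 : (X n).dist u w ≤ 3 := dist_le3 u w
    have h0 : (X n).dist v w = 0 := by omega
    have : v = w := ((reachable_all v w).dist_eq_zero_iff).mp h0
    exact Or.inr (this ▸ hwS)
  · have hvu : (X n).dist v u = 3 := by rw [SimpleGraph.dist_comm]; exact hd
    rw [hvu] at hw
    have h1 : (X n).dist v w ≤ 3 := dist_le3 v w
    have h0 : (X n).dist u w = 0 := by omega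
    have : u = w := ((reachable_all u w).dist_eq_zero_iff).mp h0
    exact Or.inl (this ▸ hwS)

lemma forced_of_row2 {S : Set (Fin 5 × Fin (n+7))} (hS : IsStrongResolvingSet (X n) S)
    {a b : Fin (n+7)} (hf : Far a b) :
    ((2 : Fin 5), a) ∈ S ∨ ((2 : Fin 5), b) ∈ S := by
  have hd : (X n).dist (2,a) (2,b) = 2 := dist_22_far hf
  obtain ⟨w, hwS, hw⟩ := hS (2,a) (2,b) (by simp [Prod.ext_iff, hf.1])
  rcases hw with hw | hw
  · rw [hd] at hw
    have h1 : (X n).dist ((2:Fin 5),a) w ≤ 2 := dist_from2_le a w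
    have h0 : (X n).dist ((2:Fin 5),b) w = 0 := by omega
    have : ((2:Fin 5),b) = w := ((reachable_all _ w).dist_eq_zero_iff).mp h0
    exact Or.inr (this ▸ hwS)
  · have hvu : (X n).dist ((2:Fin 5),b) ((2:Fin 5),a) = 2 := by
      rw [SimpleGraph.dist_comm]; exact hd
    rw [hvu] at hw
    have h1 : (X n).dist ((2:Fin 5),b) w ≤ 2 := dist_from2_le b w
    have h0 : (X n).dist ((2:Fin 5),a) w = 0 := by omega
    have : ((2:Fin 5),a) = w := ((reachable_all _ w).dist_eq_zero_iff).mp h0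
    exact Or.inl (this ▸ hwS)

lemma lower_bound {S : Set (Fin 5 × Fin (n+7))} (hS : IsStrongResolvingSet (X n) S) :
    3*(n+7) - 2 ≤ S.ncard := by
  classical
  have hfin : S.Finite := Set.toFinite S
  have hncard : S.ncard = hfin.toFinset.card := Set.ncard_eq_toFinset_card S hfin
  set F := hfin.toFinset with hF
  have hmemF : ∀ x, x ∈ F ↔ x ∈ S := fun x => Set.Finite.mem_toFinset hfin
  have h03 : ∀ a, ((0:Fin 5),a) ∈ S ∨ ((3:Fin 5),a) ∈ S :=
    fun a => forced_of_dist3 hS (dist_03_eq a)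
  have h14 : ∀ a, ((1:Fin 5),a) ∈ S ∨ ((4:Fin 5),a) ∈ S :=
    fun a => forced_of_dist3 hS (dist_14_eq a)
  set A := F.filter (fun p => p.1 = 0 ∨ p.1 = 3) with hA
  set B := F.filter (fun p => p.1 = 1 ∨ p.1 = 4) with hB
  set Cc := F.filter (fun p => p.1 = 2) with hCc
  have hAcard : n + 7 ≤ A.card := by
    have := Finset.card_le_card_of_injOn
      (f := fun a : Fin (n+7) => if ((0:Fin 5),a) ∈ S then ((0:Fin 5),a) else ((3:Fin 5),a))
      (s := Finset.univ) (t := A) ?_ ?_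
    · simpa using this
    · intro a _
      by_cases h : ((0:Fin 5),a) ∈ S
      · simp only [h, if_pos]
        rw [hA, Finset.mem_coe, Finset.mem_filter, hmemF]
        exact ⟨h, Or.inl rfl⟩
      · simp only [h, if_neg, not_false_iff]
        rw [hA, Finset.mem_coe, Finset.mem_filter, hmemF]
        exact ⟨(h03 a).resolve_left h, Or.inr rfl⟩
    · intro a1 _ a2 _ heq
      have k : ∀ a : Fin (n+7),
          ((if ((0:Fin 5),a) ∈ S then ((0:Fin 5),a) else ((3:Fin 5),a)).2 = a) := by
        intro a; split_ifs <;> rfl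
      simpa [k] using congrArg Prod.snd heq
  have hBcard : n + 7 ≤ B.card := by
    have := Finset.card_le_card_of_injOn
      (f := fun a : Fin (n+7) => if ((1:Fin 5),a) ∈ S then ((1:Fin 5),a) else ((4:Fin 5),a))
      (s := Finset.univ) (t := B) ?_ ?_
    · simpa using this
    · intro a _
      by_cases h : ((1:Fin 5),a) ∈ S
      · simp only [h, if_pos]
        rw [hB, Finset.mem_coe, Finset.mem_filter, hmemF]
        exact ⟨h, Or.inl rfl⟩
      · simp only [h, if_neg, not_false_iff]
        rw [hB, Finset.mem_coe, Finset.mem_filter, hmemF]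
        exact ⟨(h14 a).resolve_left h, Or.inr rfl⟩
    · intro a1 _ a2 _ heq
      have k : ∀ a : Fin (n+7),
          ((if ((1:Fin 5),a) ∈ S then ((1:Fin 5),a) else ((4:Fin 5),a)).2 = a) := by
        intro a; split_ifs <;> rfl
      simpa [k] using congrArg Prod.snd heq
  have hCcard : n + 5 ≤ Cc.card := by
    set Tbad := Finset.univ.filter (fun a : Fin (n+7) => ((2:Fin 5),a) ∉ S) with hTbad
    have hbad2 : Tbad.card ≤ 2 := by
      by_contra hc
      push_neg at hc
      obtain ⟨t, ht, hc3⟩ := Finset.exists_subset_card_eq hc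
      obtain ⟨a, b, c, hab, hac, hbc, rfl⟩ := Finset.card_eq_three.mp hc3
      have hmem : ∀ x ∈ ({a,b,c} : Finset (Fin (n+7))), ((2:Fin 5),x) ∉ S := by
        intro x hx
        have := ht hx
        rw [hTbad, Finset.mem_filter] at this
        exact this.2
      have hcadj : ∀ x y : Fin (n+7), x ≠ y → ((2:Fin 5),x) ∉ S → ((2:Fin 5),y) ∉ S →
          (Cy n).Adj x y := by
        intro x y hxy hx hy
        rcases trichotomy x y with h | h | h
        · exact absurd h hxy
        · exact h
        · rcases forced_of_row2 hS h with h' | h'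
          · exact absurd h' hx
          · exact absurd h' hy
      have c1 := hcadj a b hab (hmem a (by simp)) (hmem b (by simp))
      have c2 := hcadj b c hbc (hmem b (by simp)) (hmem c (by simp))
      have c3 := hcadj a c hac (hmem a (by simp)) (hmem c (by simp))
      exact triangle_free c1 c2 c3
    set Tgood := Finset.univ.filter (fun a : Fin (n+7) => ((2:Fin 5),a) ∈ S) with hTgood
    have hsplit : Tgood.card + Tbad.card = n + 7 := by
      have := Finset.card_filter_add_card_filter_not
        (s := (Finset.univ : Finset (Fin (n+7))))
        (p := fun a => ((2:Fin 5),a) ∈ S)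
      simpa [hTgood, hTbad] using this
    have hinj : Tgood.card ≤ Cc.card := by
      apply Finset.card_le_card_of_injOn (f := fun a : Fin (n+7) => ((2:Fin 5),a))
      · intro a ha
        rw [hTgood, Finset.mem_coe, Finset.mem_filter] at ha
        rw [hCc, Finset.mem_coe, Finset.mem_filter, hmemF]
        exact ⟨ha.2, rfl⟩
      · intro a1 _ a2 _ heq
        exact congrArg Prod.snd heq
    omega
  have hdisjAB : Disjoint A B := by
    rw [Finset.disjoint_left]
    intro p hp hq
    rw [hA, Finset.mem_filter] at hp
    rw [hB, Finset.mem_filter] at hq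
    rcases hp.2 with h1 | h1 <;> rcases hq.2 with h2 | h2 <;> rw [h1] at h2 <;> exact absurd h2 (by decide)
  have hdisjABC : Disjoint (A ∪ B) Cc := by
    rw [Finset.disjoint_left]
    intro p hp hq
    rw [hCc, Finset.mem_filter] at hq
    rw [Finset.mem_union] at hp
    rcases hp with hp | hp
    · rw [hA, Finset.mem_filter] at hp
      rcases hp.2 with h1 | h1 <;> rw [h1] at hq <;> exact absurd hq.2 (by decide)
    · rw [hB, Finset.mem_filter] at hp
      rcases hp.2 with h1 | h1 <;> rw [h1] at hq <;> exact absurd hq.2 (by decide)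
  have hsub : A ∪ B ∪ Cc ⊆ F := by
    intro p hp
    rw [Finset.mem_union, Finset.mem_union] at hp
    rcases hp with (hp | hp) | hp
    · exact (Finset.mem_filter.mp hp).1
    · exact (Finset.mem_filter.mp hp).1
    · exact (Finset.mem_filter.mp hp).1
  have htotal : A.card + B.card + Cc.card ≤ F.card := by
    have h1 : (A ∪ B ∪ Cc).card = A.card + B.card + Cc.card := by
      rw [Finset.card_union_of_disjoint hdisjABC, Finset.card_union_of_disjoint hdisjAB]
    rw [← h1]
    exact Finset.card_le_card hsub
  rw [hncard]
  omega

end MP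
namespace MP
variable {n : ℕ}

/-- The explicit strong resolving set: rows 0 and 1, and row 2 minus two adjacent vertices. -/
def F0 (n : ℕ) : Finset (Fin 5 × Fin (n+7)) :=
  (({0,1} : Finset (Fin 5)) ×ˢ Finset.univ) ∪
    (({2} : Finset (Fin 5)) ×ˢ (Finset.univ \ ({0,1} : Finset (Fin (n+7)))))

lemma memF0_iff (p : Fin 5 × Fin (n+7)) :
    p ∈ F0 n ↔ ((p.1 = 0 ∨ p.1 = 1) ∨ (p.1 = 2 ∧ ¬(p.2 = 0 ∨ p.2 = 1))) := by
  simp only [F0, Finset.mem_union, Finset.mem_product, Finset.mem_insert,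
    Finset.mem_singleton, Finset.mem_sdiff, Finset.mem_univ, true_and, and_true]

lemma card_F0 : (F0 n).card = 3*n + 19 := by
  have hdisj : Disjoint (({0,1} : Finset (Fin 5)) ×ˢ (Finset.univ : Finset (Fin (n+7))))
      (({2} : Finset (Fin 5)) ×ˢ (Finset.univ \ ({0,1} : Finset (Fin (n+7))))) := by
    rw [Finset.disjoint_left]
    intro p hp hq
    rw [Finset.mem_product] at hp hq
    have h1 := hp.1
    have h2 := hq.1
    simp only [Finset.mem_insert, Finset.mem_singleton] at h1 h2
    rcases h1 with h1 | h1 <;> rw [h2] at h1 <;> exact absurd h1 (by decide)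
  have c1 : ({0,1} : Finset (Fin 5)).card = 2 := by decide
  have c2 : ({2} : Finset (Fin 5)).card = 1 := by decide
  have c3 : (Finset.univ : Finset (Fin (n+7))).card = n+7 := by
    rw [Finset.card_univ, Fintype.card_fin]
  have c4 : (({0,1} : Finset (Fin (n+7)))).card = 2 := by
    have h01 : (0 : Fin (n+7)) ∉ ({1} : Finset (Fin (n+7))) := by
      simp only [Finset.mem_singleton]
      exact fun h => one_ne_zero' h.symm
    rw [Finset.card_insert_of_notMem h01, Finset.card_singleton]
  have c5 : ((Finset.univ : Finset (Fin (n+7))) \ ({0,1} : Finset (Fin (n+7)))).card = n+5 := by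
    rw [Finset.card_sdiff_of_subset (Finset.subset_univ _), c3, c4]
    omega
  have hA : ((({0,1} : Finset (Fin 5))) ×ˢ (Finset.univ : Finset (Fin (n+7)))).card = 2*(n+7) := by
    rw [Finset.card_product, c1, c3]
  have hB : ((({2} : Finset (Fin 5))) ×ˢ ((Finset.univ : Finset (Fin (n+7))) \ ({0,1} : Finset (Fin (n+7))))).card = n+5 := by
    rw [Finset.card_product, c2, c5]
    ring
  rw [F0, Finset.card_union_of_disjoint hdisj, hA, hB]
  ring

lemma mem0S (b : Fin (n+7)) : ((0:Fin 5), b) ∈ (↑(F0 n) : Set (Fin 5 × Fin (n+7))) := by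
  rw [Finset.mem_coe, memF0_iff]; exact Or.inl (Or.inl rfl)

lemma mem1S (b : Fin (n+7)) : ((1:Fin 5), b) ∈ (↑(F0 n) : Set (Fin 5 × Fin (n+7))) := by
  rw [Finset.mem_coe, memF0_iff]; exact Or.inl (Or.inr rfl)

lemma mem22S : ((2:Fin 5), (2:Fin (n+7))) ∈ (↑(F0 n) : Set (Fin 5 × Fin (n+7))) := by
  rw [Finset.mem_coe, memF0_iff]
  refine Or.inr ⟨rfl, ?_⟩
  rintro (h | h)
  · exact two_ne_zero' h
  · exact two_ne_one' h

/-- The `good` statement for a pair. -/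
def Good (u v : Fin 5 × Fin (n+7)) : Prop :=
  ∃ w ∈ (↑(F0 n) : Set (Fin 5 × Fin (n+7))),
    (X n).dist u w = (X n).dist u v + (X n).dist v w ∨
    (X n).dist v w = (X n).dist v u + (X n).dist u w

lemma pA21 : Pa.Adj 2 1 := pa' _ _ (by decide)
lemma pA32 : Pa.Adj 3 2 := pa' _ _ (by decide)
lemma pA43 : Pa.Adj 4 3 := pa' _ _ (by decide)
lemma pA34 : Pa.Adj 3 4 := pa' _ _ (by decide)

lemma good_22 {a b : Fin (n+7)} (ha : a = 0 ∨ a = 1) (hb : b = 0 ∨ b = 1) (hab : a ≠ b) :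
    Good ((2:Fin 5), a) ((2:Fin 5), b) := by
  have c01 : (Cy n).Adj 0 1 := cadj_iff.mpr (Or.inr (by ring))
  have c12 : (Cy n).Adj 1 2 := cadj_iff.mpr (Or.inr (by ring))
  have f02 : Far (0 : Fin (n+7)) 2 := by
    have h := (far_add_two (0 : Fin (n+7))).symm
    rwa [zero_add] at h
  rcases ha with rfl | rfl <;> rcases hb with rfl | rfl
  · exact absurd rfl hab
  · -- a = 0, b = 1
    refine ⟨((2:Fin 5), (2:Fin (n+7))), mem22S, Or.inl ?_⟩
    have e1 : (X n).dist ((2:Fin 5), (0:Fin (n+7))) ((2:Fin 5), (2:Fin (n+7))) = 2 :=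
      dist_22_far f02
    have e2 : (X n).dist ((2:Fin 5), (0:Fin (n+7))) ((2:Fin 5), (1:Fin (n+7))) = 1 :=
      dist_one (adj_A c01)
    have e3 : (X n).dist ((2:Fin 5), (1:Fin (n+7))) ((2:Fin 5), (2:Fin (n+7))) = 1 :=
      dist_one (adj_A c12)
    rw [e1, e2, e3]
  · -- a = 1, b = 0
    refine ⟨((2:Fin 5), (2:Fin (n+7))), mem22S, Or.inr ?_⟩
    have e1 : (X n).dist ((2:Fin 5), (0:Fin (n+7))) ((2:Fin 5), (2:Fin (n+7))) = 2 :=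
      dist_22_far f02
    have e2 : (X n).dist ((2:Fin 5), (0:Fin (n+7))) ((2:Fin 5), (1:Fin (n+7))) = 1 :=
      dist_one (adj_A c01)
    have e3 : (X n).dist ((2:Fin 5), (1:Fin (n+7))) ((2:Fin 5), (2:Fin (n+7))) = 1 :=
      dist_one (adj_A c12)
    rw [e1, e2, e3]
  · exact absurd rfl hab

lemma good_23 (a b : Fin (n+7)) : Good ((2:Fin 5), a) ((3:Fin 5), b) := by
  refine ⟨((0:Fin 5), b), mem0S b, Or.inr ?_⟩
  have e1 : (X n).dist ((3:Fin 5), b) ((0:Fin 5), b) = 3 := by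
    rw [SimpleGraph.dist_comm]; exact dist_03_eq b
  rcases trichotomy a b with rfl | hc | hf
  · have e2 : (X n).dist ((3:Fin 5), a) ((2:Fin 5), a) = 1 := dist_one (adj_B pA32)
    have e3 : (X n).dist ((2:Fin 5), a) ((0:Fin 5), a) = 2 := by
      rw [SimpleGraph.dist_comm]; exact dist_02_near (Or.inl rfl)
    rw [e1, e2, e3]
  · have e2 : (X n).dist ((3:Fin 5), b) ((2:Fin 5), a) = 1 := dist_one (adj_C pA32 hc.symm)
    have e3 : (X n).dist ((2:Fin 5), a) ((0:Fin 5), b) = 2 := by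
      rw [SimpleGraph.dist_comm]; exact dist_02_near (Or.inr hc.symm)
    rw [e1, e2, e3]
  · have e2 : (X n).dist ((3:Fin 5), b) ((2:Fin 5), a) = 2 := by
      rw [SimpleGraph.dist_comm]; exact dist_23_far hf
    have e3 : (X n).dist ((2:Fin 5), a) ((0:Fin 5), b) = 1 := by
      rw [SimpleGraph.dist_comm]; exact dist_02_far hf.symm
    rw [e1, e2, e3]

lemma good_32 (a b : Fin (n+7)) : Good ((3:Fin 5), a) ((2:Fin 5), b) := by
  refine ⟨((0:Fin 5), a), mem0S a, Or.inl ?_⟩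
  have e1 : (X n).dist ((3:Fin 5), a) ((0:Fin 5), a) = 3 := by
    rw [SimpleGraph.dist_comm]; exact dist_03_eq a
  rcases trichotomy a b with rfl | hc | hf
  · have e2 : (X n).dist ((3:Fin 5), a) ((2:Fin 5), a) = 1 := dist_one (adj_B pA32)
    have e3 : (X n).dist ((2:Fin 5), a) ((0:Fin 5), a) = 2 := by
      rw [SimpleGraph.dist_comm]; exact dist_02_near (Or.inl rfl)
    rw [e1, e2, e3]
  · have e2 : (X n).dist ((3:Fin 5), a) ((2:Fin 5), b) = 1 := dist_one (adj_C pA32 hc)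
    have e3 : (X n).dist ((2:Fin 5), b) ((0:Fin 5), a) = 2 := by
      rw [SimpleGraph.dist_comm]; exact dist_02_near (Or.inr hc)
    rw [e1, e2, e3]
  · have e2 : (X n).dist ((3:Fin 5), a) ((2:Fin 5), b) = 2 := by
      rw [SimpleGraph.dist_comm]; exact dist_23_far hf.symm
    have e3 : (X n).dist ((2:Fin 5), b) ((0:Fin 5), a) = 1 := by
      rw [SimpleGraph.dist_comm]; exact dist_02_far hf
    rw [e1, e2, e3]

lemma good_33 {a b : Fin (n+7)} (hab : a ≠ b) : Good ((3:Fin 5), a) ((3:Fin 5), b) := by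
  refine ⟨((0:Fin 5), a), mem0S a, Or.inl ?_⟩
  have e1 : (X n).dist ((3:Fin 5), a) ((0:Fin 5), a) = 3 := by
    rw [SimpleGraph.dist_comm]; exact dist_03_eq a
  rcases trichotomy a b with rfl | hc | hf
  · exact absurd rfl hab
  · have e2 : (X n).dist ((3:Fin 5), a) ((3:Fin 5), b) = 1 := dist_one (adj_A hc)
    have e3 : (X n).dist ((3:Fin 5), b) ((0:Fin 5), a) = 2 := by
      rw [SimpleGraph.dist_comm]; exact dist_03_cadj hc
    rw [e1, e2, e3]
  · have e2 : (X n).dist ((3:Fin 5), a) ((3:Fin 5), b) = 2 := dist_33_far hf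
    have e3 : (X n).dist ((3:Fin 5), b) ((0:Fin 5), a) = 1 := by
      rw [SimpleGraph.dist_comm]; exact dist_03_far hf
    rw [e1, e2, e3]

lemma good_34 (a b : Fin (n+7)) : Good ((3:Fin 5), a) ((4:Fin 5), b) := by
  refine ⟨((0:Fin 5), a), mem0S a, Or.inl ?_⟩
  have e1 : (X n).dist ((3:Fin 5), a) ((0:Fin 5), a) = 3 := by
    rw [SimpleGraph.dist_comm]; exact dist_03_eq a
  rcases trichotomy a b with rfl | hc | hf
  · have e2 : (X n).dist ((3:Fin 5), a) ((4:Fin 5), a) = 1 := dist_one (adj_B pA34)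
    have e3 : (X n).dist ((4:Fin 5), a) ((0:Fin 5), a) = 2 := by
      rw [SimpleGraph.dist_comm]; exact dist_04_near (Or.inl rfl)
    rw [e1, e2, e3]
  · have e2 : (X n).dist ((3:Fin 5), a) ((4:Fin 5), b) = 1 := dist_one (adj_C pA34 hc)
    have e3 : (X n).dist ((4:Fin 5), b) ((0:Fin 5), a) = 2 := by
      rw [SimpleGraph.dist_comm]; exact dist_04_near (Or.inr hc)
    rw [e1, e2, e3]
  · have e2 : (X n).dist ((3:Fin 5), a) ((4:Fin 5), b) = 2 := dist_34_far hf
    have e3 : (X n).dist ((4:Fin 5), b) ((0:Fin 5), a) = 1 := by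
      rw [SimpleGraph.dist_comm]; exact dist_04_far hf
    rw [e1, e2, e3]

lemma good_43 (a b : Fin (n+7)) : Good ((4:Fin 5), a) ((3:Fin 5), b) := by
  refine ⟨((1:Fin 5), a), mem1S a, Or.inl ?_⟩
  have e1 : (X n).dist ((4:Fin 5), a) ((1:Fin 5), a) = 3 := by
    rw [SimpleGraph.dist_comm]; exact dist_14_eq a
  rcases trichotomy a b with rfl | hc | hf
  · have e2 : (X n).dist ((4:Fin 5), a) ((3:Fin 5), a) = 1 := dist_one (adj_B pA43)
    have e3 : (X n).dist ((3:Fin 5), a) ((1:Fin 5), a) = 2 := by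
      rw [SimpleGraph.dist_comm]; exact dist_13_near (Or.inl rfl)
    rw [e1, e2, e3]
  · have e2 : (X n).dist ((4:Fin 5), a) ((3:Fin 5), b) = 1 := dist_one (adj_C pA43 hc)
    have e3 : (X n).dist ((3:Fin 5), b) ((1:Fin 5), a) = 2 := by
      rw [SimpleGraph.dist_comm]; exact dist_13_near (Or.inr hc)
    rw [e1, e2, e3]
  · have e2 : (X n).dist ((4:Fin 5), a) ((3:Fin 5), b) = 2 := by
      rw [SimpleGraph.dist_comm]; exact dist_34_far hf.symm
    have e3 : (X n).dist ((3:Fin 5), b) ((1:Fin 5), a) = 1 := by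
      rw [SimpleGraph.dist_comm]; exact dist_13_far hf
    rw [e1, e2, e3]

lemma good_44 {a b : Fin (n+7)} (hab : a ≠ b) : Good ((4:Fin 5), a) ((4:Fin 5), b) := by
  refine ⟨((1:Fin 5), a), mem1S a, Or.inl ?_⟩
  have e1 : (X n).dist ((4:Fin 5), a) ((1:Fin 5), a) = 3 := by
    rw [SimpleGraph.dist_comm]; exact dist_14_eq a
  rcases trichotomy a b with rfl | hc | hf
  · exact absurd rfl hab
  · have e2 : (X n).dist ((4:Fin 5), a) ((4:Fin 5), b) = 1 := dist_one (adj_A hc)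
    have e3 : (X n).dist ((4:Fin 5), b) ((1:Fin 5), a) = 2 := by
      rw [SimpleGraph.dist_comm]; exact dist_14_cadj hc
    rw [e1, e2, e3]
  · have e2 : (X n).dist ((4:Fin 5), a) ((4:Fin 5), b) = 2 := dist_44_far hf
    have e3 : (X n).dist ((4:Fin 5), b) ((1:Fin 5), a) = 1 := by
      rw [SimpleGraph.dist_comm]; exact dist_14_far hf
    rw [e1, e2, e3]

lemma good_24 (a b : Fin (n+7)) : Good ((2:Fin 5), a) ((4:Fin 5), b) := by
  refine ⟨((1:Fin 5), b), mem1S b, Or.inr ?_⟩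
  have e1 : (X n).dist ((4:Fin 5), b) ((1:Fin 5), b) = 3 := by
    rw [SimpleGraph.dist_comm]; exact dist_14_eq b
  rcases trichotomy a b with rfl | hc | hf
  · have e2 : (X n).dist ((4:Fin 5), a) ((2:Fin 5), a) = 2 := dist_42_near (Or.inl rfl)
    have e3 : (X n).dist ((2:Fin 5), a) ((1:Fin 5), a) = 1 := dist_one (adj_B pA21)
    rw [e1, e2, e3]
  · have e2 : (X n).dist ((4:Fin 5), b) ((2:Fin 5), a) = 2 := dist_42_near (Or.inr hc.symm)
    have e3 : (X n).dist ((2:Fin 5), a) ((1:Fin 5), b) = 1 := dist_one (adj_C pA21 hc)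
    rw [e1, e2, e3]
  · have e2 : (X n).dist ((4:Fin 5), b) ((2:Fin 5), a) = 1 := dist_42_far hf.symm
    have e3 : (X n).dist ((2:Fin 5), a) ((1:Fin 5), b) = 2 := by
      rw [SimpleGraph.dist_comm]; exact dist_12_far hf.symm
    rw [e1, e2, e3]

lemma good_42 (a b : Fin (n+7)) : Good ((4:Fin 5), a) ((2:Fin 5), b) := by
  refine ⟨((1:Fin 5), a), mem1S a, Or.inl ?_⟩
  have e1 : (X n).dist ((4:Fin 5), a) ((1:Fin 5), a) = 3 := by
    rw [SimpleGraph.dist_comm]; exact dist_14_eq a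
  rcases trichotomy a b with rfl | hc | hf
  · have e2 : (X n).dist ((4:Fin 5), a) ((2:Fin 5), a) = 2 := dist_42_near (Or.inl rfl)
    have e3 : (X n).dist ((2:Fin 5), a) ((1:Fin 5), a) = 1 := dist_one (adj_B pA21)
    rw [e1, e2, e3]
  · have e2 : (X n).dist ((4:Fin 5), a) ((2:Fin 5), b) = 2 := dist_42_near (Or.inr hc)
    have e3 : (X n).dist ((2:Fin 5), b) ((1:Fin 5), a) = 1 := dist_one (adj_C pA21 hc.symm)
    rw [e1, e2, e3]
  · have e2 : (X n).dist ((4:Fin 5), a) ((2:Fin 5), b) = 1 := dist_42_far hf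
    have e3 : (X n).dist ((2:Fin 5), b) ((1:Fin 5), a) = 2 := by
      rw [SimpleGraph.dist_comm]; exact dist_12_far hf
    rw [e1, e2, e3]

lemma srs_F0 : IsStrongResolvingSet (X n) (↑(F0 n) : Set (Fin 5 × Fin (n+7))) := by
  intro u v hne
  by_cases hu : u ∈ (↑(F0 n) : Set (Fin 5 × Fin (n+7)))
  · exact ⟨u, hu, Or.inr (by rw [SimpleGraph.dist_self, add_zero])⟩
  by_cases hv : v ∈ (↑(F0 n) : Set (Fin 5 × Fin (n+7)))
  · exact ⟨v, hv, Or.inl (by rw [SimpleGraph.dist_self, add_zero])⟩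
  obtain ⟨gu, a⟩ := u
  obtain ⟨gv, b⟩ := v
  rw [Finset.mem_coe, memF0_iff] at hu hv
  fin_cases gu
  · exact absurd (Or.inl (Or.inl rfl)) hu
  · exact absurd (Or.inl (Or.inr rfl)) hu
  · have ha : a = 0 ∨ a = 1 := by by_contra h; exact hu (Or.inr ⟨rfl, h⟩)
    fin_cases gv
    · exact absurd (Or.inl (Or.inl rfl)) hv
    · exact absurd (Or.inl (Or.inr rfl)) hv
    · have hb : b = 0 ∨ b = 1 := by by_contra h; exact hv (Or.inr ⟨rfl, h⟩)
      have hab : a ≠ b := fun h => hne (by rw [h])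
      exact good_22 ha hb hab
    · exact good_23 a b
    · exact good_24 a b
  · fin_cases gv
    · exact absurd (Or.inl (Or.inl rfl)) hv
    · exact absurd (Or.inl (Or.inr rfl)) hv
    · exact good_32 a b
    · have hab : a ≠ b := fun h => hne (by rw [h])
      exact good_33 hab
    · exact good_34 a b
  · fin_cases gv
    · exact absurd (Or.inl (Or.inl rfl)) hv
    · exact absurd (Or.inl (Or.inr rfl)) hv
    · exact good_42 a b
    · exact good_43 a b
    · have hab : a ≠ b := fun h => hne (by rw [h])
      exact good_44 hab

end MP

/-- the strong metric dimension of `P_5 ⋄ C_r` for `r ≥ 7`. -/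
theorem sdim_path5_modularProduct_cycle (r : ℕ) (hr : 7 ≤ r) :
    sdim (modularProduct (pathGraph 5) (cycleGraph r)) = 3 * r - 2 := by
  obtain ⟨n, rfl⟩ : ∃ n, r = n + 7 := ⟨r - 7, by omega⟩
  have hmem : (3*(n+7) - 2) ∈ {m | ∃ S : Set (Fin 5 × Fin (n+7)), S.ncard = m ∧
      IsStrongResolvingSet (modularProduct (pathGraph 5) (cycleGraph (n+7))) S} := by
    refine ⟨(↑(MP.F0 n) : Set (Fin 5 × Fin (n+7))), ?_, MP.srs_F0⟩
    rw [Set.ncard_coe_finset, MP.card_F0]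
    omega
  unfold sdim
  apply le_antisymm
  · exact Nat.sInf_le hmem
  · refine le_csInf ⟨_, hmem⟩ ?_
    rintro m ⟨S, rfl, hS⟩
    exact MP.lower_bound hS
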